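/- arXiv:2601.01731 — 2 statements merged into one kernel-verified Lean document; each statement's English description precedes it below -/
import Mathlib

section
/- On the Cartesian torus grid, let κ > 0, Δt > 0, let B satisfy hypotheses (H2) and (H3) with α ∈ [0,1), and let W_{ij} ∈ L¹(T^d) (i,j = 1,…,n) satisfy the symmetry W_{ij}(x) = W_{ji}(−x) for a.e. x and the positive semidefiniteness ∑_{i,j=1}^n ∫∫ W_{ij}(x−y)·v_i(x)·v_j(y) dx dy ≥ 0 for all v_1,…,v_n ∈ L²(T^d). Let u⁰_i : G → [0,∞) and let (u^k)_{k=1,…,N} be componentwise strictly positive and solve the implicit Euler scheme with fully implicit potentials. Then the following uniform bound on the discrete Fisher information holds: (1−α)·(H_B(u^N) − H_B(u⁰)) + (α/κ)·(H_R(u^N) − H_R(u⁰)) + κ·(1−α)²·∑_{k=1}^N Δt·∑_{i=1}^n ∑_{σ∈E} τ_σ·|D_σ √(u^k_i)|² ≤ 0. -/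
open MeasureTheory Real Finset

namespace SG

instance : Fact ((0:ℝ) < 1) := ⟨one_pos⟩

variable {d : ℕ}

/-- Cells of the Cartesian torus grid. -/
abbrev Cell (M : Fin d → ℕ) := ∀ ℓ : Fin d, ZMod (M ℓ)

/-- Cell measure `m(K) = Δx₁⋯Δx_d`. -/
noncomputable def mK (M : Fin d → ℕ) : ℝ := ∏ ℓ, ((M ℓ : ℝ))⁻¹

/-- Transmissibility coefficient of an edge in direction `ℓ`:
`τ_σ = m(σ)/d_σ = m(K)·M_ℓ²`. -/
noncomputable def τ (M : Fin d → ℕ) (ℓ : Fin d) : ℝ := mK M * (M ℓ : ℝ) ^ 2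

/-- Shift a cell by `s` in direction `ℓ` (mod `M ℓ`). -/
def shift (M : Fin d → ℕ) (K : Cell M) (ℓ : Fin d) (s : ℤ) : Cell M :=
  Function.update K ℓ (K ℓ + (s : ZMod (M ℓ)))

/-- Hypothesis (H2): `B` is continuous on `[0,∞)` with `0 < B(s) ≤ 1` for `s ≥ 0`. -/
def H2 (B : ℝ → ℝ) : Prop :=
  ContinuousOn B (Set.Ici 0) ∧ ∀ s : ℝ, 0 ≤ s → 0 < B s ∧ B s ≤ 1

/-- Hypothesis (H3): `α ∈ [0,1)` and `B(s) ≥ 1 − α·s` for all `s ≥ 0`. -/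
def H3 (B : ℝ → ℝ) (α : ℝ) : Prop :=
  0 ≤ α ∧ α < 1 ∧ ∀ s : ℝ, 0 ≤ s → 1 - α * s ≤ B s

/-- The scaled weight function `B_κ(s) = κ·B(s/κ)`. -/
noncomputable def Bk (κ : ℝ) (B : ℝ → ℝ) (s : ℝ) : ℝ := κ * B (s / κ)

/-- Upwind value on the (oriented) edge from `K` to `L`. -/
noncomputable def upw {M : Fin d → ℕ} (u p : Cell M → ℝ) (K L : Cell M) : ℝ :=
  if 0 ≤ p L - p K then u L else u K

/-- Numerical flux `F_{K,σ}[u,p]` from `K` through the edge (in direction `ℓ`) to its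
neighbor `L`. -/
noncomputable def flux (M : Fin d → ℕ) (κ : ℝ) (B : ℝ → ℝ) (u p : Cell M → ℝ)
    (ℓ : Fin d) (K L : Cell M) : ℝ :=
  -(τ M ℓ) * (Bk κ B |p L - p K| * (u L - u K) + upw u p K L * (p L - p K))

/-- Sum of the numerical fluxes over the `2d` edges incident to `K`. -/
noncomputable def fluxSum (M : Fin d → ℕ) (κ : ℝ) (B : ℝ → ℝ) (u p : Cell M → ℝ)
    (K : Cell M) : ℝ :=
  ∑ ℓ : Fin d, (flux M κ B u p ℓ K (shift M K ℓ 1) + flux M κ B u p ℓ K (shift M K ℓ (-1)))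

/-- One implicit Euler finite-volume step with prescribed potential `p`. -/
def Step (M : Fin d → ℕ) (κ Δt : ℝ) (B : ℝ → ℝ) (uPrev u p : Cell M → ℝ) : Prop :=
  ∀ K : Cell M, mK M * (u K - uPrev K) / Δt + fluxSum M κ B u p K = 0

/-- Discrete Boltzmann entropy. -/
noncomputable def HB (M : Fin d → ℕ) [∀ ℓ, NeZero (M ℓ)] {n : ℕ}
    (u : Fin n → Cell M → ℝ) : ℝ :=
  ∑ i, ∑ K : Cell M, mK M * (u i K * (Real.log (u i K) - 1))

/-- Discrete Rao entropy associated to discrete kernels `Wd`. -/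
noncomputable def HR (M : Fin d → ℕ) [∀ ℓ, NeZero (M ℓ)] {n : ℕ}
    (Wd : Fin n → Fin n → Cell M → Cell M → ℝ) (u : Fin n → Cell M → ℝ) : ℝ :=
  (1/2) * ∑ i, ∑ j, ∑ K : Cell M, ∑ J : Cell M,
    mK M * mK M * Wd i j K J * u i K * u j J

/-- Boltzmann entropy production term `P_B`. -/
noncomputable def PB (M : Fin d → ℕ) [∀ ℓ, NeZero (M ℓ)] {n : ℕ} (κ : ℝ) (B : ℝ → ℝ)
    (u p : Fin n → Cell M → ℝ) : ℝ :=
  4 * ∑ i, ∑ K : Cell M, ∑ ℓ : Fin d,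
    τ M ℓ * Bk κ B |p i (shift M K ℓ 1) - p i K| *
      (Real.sqrt (u i (shift M K ℓ 1)) - Real.sqrt (u i K)) ^ 2

/-- Rao entropy production term `P_R`. -/
noncomputable def PR (M : Fin d → ℕ) [∀ ℓ, NeZero (M ℓ)] {n : ℕ}
    (u p : Fin n → Cell M → ℝ) : ℝ :=
  ∑ i, ∑ K : Cell M, ∑ ℓ : Fin d,
    τ M ℓ * upw (u i) (p i) K (shift M K ℓ 1) * (p i (shift M K ℓ 1) - p i K) ^ 2

/-- Cross term `X(u,p)`. -/
noncomputable def Xc (M : Fin d → ℕ) [∀ ℓ, NeZero (M ℓ)] {n : ℕ}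
    (u p : Fin n → Cell M → ℝ) : ℝ :=
  ∑ i, ∑ K : Cell M, ∑ ℓ : Fin d,
    τ M ℓ * (p i (shift M K ℓ 1) - p i K) * (u i (shift M K ℓ 1) - u i K)

/-- Discrete Fisher information `∑_i ∑_σ τ_σ |D_σ √u_i|²`. -/
noncomputable def Fisher (M : Fin d → ℕ) [∀ ℓ, NeZero (M ℓ)] {n : ℕ}
    (u : Fin n → Cell M → ℝ) : ℝ :=
  ∑ i, ∑ K : Cell M, ∑ ℓ : Fin d,
    τ M ℓ * (Real.sqrt (u i (shift M K ℓ 1)) - Real.sqrt (u i K)) ^ 2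

/-- The torus `T^d = (ℝ/ℤ)^d`. -/
abbrev Td (d : ℕ) := Fin d → AddCircle (1 : ℝ)

/-- The box `Q_K ⊆ T^d` corresponding to the cell `K`. -/
noncomputable def QK (M : Fin d → ℕ) (K : Cell M) : Set (Td d) :=
  Set.univ.pi fun ℓ => (fun t : ℝ => (t : AddCircle (1 : ℝ))) ''
    Set.Ico (((K ℓ).val : ℝ) / (M ℓ)) ((((K ℓ).val : ℝ) + 1) / (M ℓ))

/-- The discrete kernel `W_{KJ} = (m(K)m(J))⁻¹ ∫_{Q_K}∫_{Q_J} W(x−y) dy dx`. -/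
noncomputable def Wdisc (M : Fin d → ℕ) (W : Td d → ℝ) (K J : Cell M) : ℝ :=
  (mK M * mK M)⁻¹ * ∫ x in QK M K, ∫ y in QK M J, W (x - y)

/-- The discrete nonlocal potential `p_i(K) = ∑_j ∑_J m(J)·Wd^{ij}_{KJ}·u_j(J)`. -/
noncomputable def pot (M : Fin d → ℕ) [∀ ℓ, NeZero (M ℓ)] {n : ℕ}
    (Wd : Fin n → Fin n → Cell M → Cell M → ℝ) (u : Fin n → Cell M → ℝ)
    (i : Fin n) (K : Cell M) : ℝ :=
  ∑ j, ∑ J : Cell M, mK M * Wd i j K J * u j J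

/-- Discrete `L^q` norm of a cell function. -/
noncomputable def normq (M : Fin d → ℕ) [∀ ℓ, NeZero (M ℓ)] (q : ℝ)
    (u : Cell M → ℝ) : ℝ :=
  (∑ K : Cell M, mK M * |u K| ^ q) ^ (1/q)

/-- Discrete `L^q` norm of an edge function (dual-cell measure `m(Δ_σ) = m(σ)·d_σ = m(K)`). -/
noncomputable def enorm (M : Fin d → ℕ) [∀ ℓ, NeZero (M ℓ)] (q : ℝ)
    (w : Cell M → Fin d → ℝ) : ℝ :=
  (∑ K : Cell M, ∑ ℓ : Fin d, mK M * |w K ℓ| ^ q) ^ (1/q)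

/-- Magnitude of the discrete gradient on the edge `(K,ℓ)`:
`|∇^h_σ v| = d·D_σ v/d_σ`. -/
noncomputable def gradh (M : Fin d → ℕ) (v : Cell M → ℝ) (K : Cell M) (ℓ : Fin d) : ℝ :=
  d * (M ℓ : ℝ) * |v (shift M K ℓ 1) - v K|



/-! ### Auxiliary real-analysis lemmas -/

lemma log_lb {x y : ℝ} (hx : 0 < x) (hy : 0 < y) :
    y * (Real.log x - Real.log y) ≤ x - y := by
  have h := Real.log_le_sub_one_of_pos (show 0 < x / y by positivity)
  rw [Real.log_div hx.ne' hy.ne'] at h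
  have h2 := mul_le_mul_of_nonneg_left h hy.le
  have h3 : y * (x / y - 1) = x - y := by field_simp
  linarith [h3 ▸ h2]

set_option maxHeartbeats 2000000 in
/-- Edge inequality, κ-multiplied, for `q ≥ 0`. -/
lemma edge_nonneg (κ α a b q P : ℝ) (hκ : 0 < κ) (hα0 : 0 ≤ α) (hα1 : α < 1)
    (ha : 0 < a) (hb : 0 < b) (hq : 0 ≤ q) (hP0 : 0 < P) (hPκ : P ≤ κ)
    (hPl : κ - α * q ≤ P) :
    κ * (q * (b ^ 2 - a ^ 2) + κ * (1 - α) ^ 2 * (b - a) ^ 2) ≤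
      (P * (b ^ 2 - a ^ 2) + b ^ 2 * q) *
        (κ * ((1 - α) * (2 * (Real.log b - Real.log a))) + α * q) := by
  have h1α : (0:ℝ) ≤ 1 - α := by linarith
  obtain ⟨L, hL⟩ : ∃ L, Real.log b - Real.log a = L := ⟨_, rfl⟩
  rw [hL]
  have hbL : b - a ≤ b * L := by
    have h := log_lb ha hb
    have e : Real.log a - Real.log b = -L := by linarith [hL]
    rw [e] at h; linarith
  have haL : a * L ≤ b - a := by
    have h := log_lb hb ha
    rw [hL] at h; exact h
  have h2' : 2 * b * (b - a) ≤ 2 * b ^ 2 * L := by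
    nlinarith [mul_le_mul_of_nonneg_left hbL (by positivity : (0:ℝ) ≤ 2 * b)]
  have hκP : 0 ≤ κ - P := by linarith
  have expand : (P * (b ^ 2 - a ^ 2) + b ^ 2 * q) *
        (κ * ((1 - α) * (2 * L)) + α * q)
      = 2 * κ * (1 - α) * P * ((b ^ 2 - a ^ 2) * L) + α * q * (P * (b ^ 2 - a ^ 2))
        + κ * (1 - α) * q * (2 * b ^ 2 * L) + α * q ^ 2 * b ^ 2 := by ring
  rw [expand]
  have c1 : (0:ℝ) ≤ 2 * κ * (1 - α) * P := by
    have := mul_nonneg (mul_nonneg (mul_nonneg (by norm_num : (0:ℝ) ≤ 2) hκ.le) h1α) hP0.le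
    linarith
  have c2 : (0:ℝ) ≤ κ * (1 - α) * q := mul_nonneg (mul_nonneg hκ.le h1α) hq
  rcases le_or_gt a b with hab | hab
  · -- a ≤ b
    have hw0 : (0:ℝ) ≤ b - a := by linarith
    have hD0 : (0:ℝ) ≤ b ^ 2 - a ^ 2 := by nlinarith
    have hL0 : 0 ≤ L := by
      by_contra h
      push_neg at h
      nlinarith [hbL, mul_pos hb (neg_pos.mpr h)]
    have h1 : (b - a) ^ 2 ≤ (b ^ 2 - a ^ 2) * L := by
      have e1 : 0 ≤ (b - a) * ((a + b) * L - (b - a)) := by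
        apply mul_nonneg hw0
        nlinarith [mul_nonneg ha.le hL0, hbL]
      nlinarith [e1]
    have S1 : 2 * κ * (1 - α) * P * ((b - a) ^ 2) ≤ 2 * κ * (1 - α) * P * ((b ^ 2 - a ^ 2) * L) :=
      mul_le_mul_of_nonneg_left h1 c1
    have S2 : κ * (1 - α) * q * (b ^ 2 - a ^ 2) ≤ κ * (1 - α) * q * (2 * b ^ 2 * L) := by
      apply mul_le_mul_of_nonneg_left _ c2
      nlinarith [h2']
    have S3 : α * q ^ 2 * (b ^ 2 - a ^ 2) ≤ α * q ^ 2 * b ^ 2 := by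
      apply mul_le_mul_of_nonneg_left _ (by positivity)
      nlinarith [sq_nonneg a]
    have S4 : α * (κ - P) * (q * (b ^ 2 - a ^ 2)) ≤ α ^ 2 * q ^ 2 * (b ^ 2 - a ^ 2) := by
      have h5 : κ - P ≤ α * q := by linarith
      have h6 := mul_le_mul_of_nonneg_right h5 (mul_nonneg (mul_nonneg hα0 hq) hD0)
      nlinarith [h6]
    have S5 : α * (1 - α) * q ^ 2 * ((b - a) ^ 2) ≤ α * (1 - α) * q ^ 2 * (b ^ 2 - a ^ 2) := by
      apply mul_le_mul_of_nonneg_left _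
        (mul_nonneg (mul_nonneg hα0 h1α) (sq_nonneg q))
      nlinarith [mul_nonneg ha.le hw0]
    have key : κ ^ 2 * (1 - α) ^ 2 * (b - a) ^ 2 ≤
        2 * κ * (1 - α) * P * ((b - a) ^ 2) + α * (1 - α) * q ^ 2 * ((b - a) ^ 2) := by
      rcases eq_or_lt_of_le hα0 with h0 | h0
      · rw [← h0] at hPl ⊢
        have hPge : κ ≤ P := by linarith
        have := mul_le_mul_of_nonneg_left hPge (mul_nonneg hκ.le (sq_nonneg (b - a)))
        nlinarith [this, mul_nonneg hκ.le (mul_nonneg hP0.le (sq_nonneg (b - a)))]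
      · have hsq : (κ - P) ^ 2 ≤ α ^ 2 * q ^ 2 := by
          have h5 : κ - P ≤ α * q := by linarith
          nlinarith [mul_self_le_mul_self hκP h5]
        have hcert : 0 ≤ (1 - α) * (b - a) ^ 2 *
            ((α ^ 2 * q ^ 2 - (κ - P) ^ 2) + ((P - κ * (1 - α)) ^ 2 + κ ^ 2 * α)) := by
          apply mul_nonneg (mul_nonneg h1α (sq_nonneg _))
          have h8 : (0:ℝ) ≤ (P - κ * (1 - α)) ^ 2 + κ ^ 2 * α := by positivity
          linarith
        have hG : 0 ≤ α * (2 * κ * (1 - α) * P * ((b - a) ^ 2)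
            + α * (1 - α) * q ^ 2 * ((b - a) ^ 2) - κ ^ 2 * (1 - α) ^ 2 * (b - a) ^ 2) := by
          have hid : α * (2 * κ * (1 - α) * P * ((b - a) ^ 2)
              + α * (1 - α) * q ^ 2 * ((b - a) ^ 2) - κ ^ 2 * (1 - α) ^ 2 * (b - a) ^ 2)
              = (1 - α) * (b - a) ^ 2 *
                ((α ^ 2 * q ^ 2 - (κ - P) ^ 2) + ((P - κ * (1 - α)) ^ 2 + κ ^ 2 * α)) := by
            ring
          rw [hid]; exact hcert
        by_contra hcon
        push_neg at hcon
        nlinarith [hG, mul_pos h0 (sub_pos.mpr hcon)]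
    linarith [S1, S2, S3, S4, S5, key]
  · -- b < a
    have hw0 : (0:ℝ) ≤ a - b := by linarith
    have hD0 : b ^ 2 - a ^ 2 ≤ 0 := by nlinarith
    have hL0' : L ≤ 0 := by
      by_contra h
      push_neg at h
      nlinarith [haL, mul_pos ha h]
    have h1 : (b - a) ^ 2 ≤ (b ^ 2 - a ^ 2) * L := by
      have e2 : 0 ≤ (a - b) * ((a + b) * (-L) - (a - b)) := by
        apply mul_nonneg hw0
        nlinarith [haL, mul_nonneg hb.le (neg_nonneg.2 hL0')]
      nlinarith [e2]
    have S1 : 2 * κ * (1 - α) * P * ((b - a) ^ 2) ≤ 2 * κ * (1 - α) * P * ((b ^ 2 - a ^ 2) * L) :=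
      mul_le_mul_of_nonneg_left h1 c1
    have S2 : κ * (1 - α) * q * (2 * b * (b - a)) ≤ κ * (1 - α) * q * (2 * b ^ 2 * L) :=
      mul_le_mul_of_nonneg_left h2' c2
    have S3 : (0:ℝ) ≤ α * q ^ 2 * b ^ 2 := by positivity
    have S4 : α * q * (κ * (b ^ 2 - a ^ 2)) ≤ α * q * (P * (b ^ 2 - a ^ 2)) := by
      apply mul_le_mul_of_nonneg_left _ (mul_nonneg hα0 hq)
      nlinarith [mul_le_mul_of_nonneg_right hPκ (neg_nonneg.2 hD0)]
    have key : κ * (1 - α) ≤ 2 * P + q := by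
      rcases le_or_gt q κ with hqκ | hqκ
      · linarith [hPl, mul_le_mul_of_nonneg_left hqκ hα0,
          mul_le_mul_of_nonneg_right hα1.le hκ.le]
      · linarith [hP0, mul_nonneg hα0 hκ.le]
    have key2 : κ ^ 2 * (1 - α) ^ 2 * (b - a) ^ 2 ≤
        2 * P * (κ * (1 - α) * ((b - a) ^ 2)) + q * (κ * (1 - α) * ((b - a) ^ 2)) := by
      have h7 : 0 ≤ κ * (1 - α) * ((b - a) ^ 2) :=
        mul_nonneg (mul_nonneg hκ.le h1α) (sq_nonneg _)
      have h9 := mul_le_mul_of_nonneg_right key h7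
      nlinarith [h9]
    nlinarith [S1, S2, S3, S4, key2]

/-- Edge inequality for arbitrary sign of `q`. -/
lemma edge_all (κ α a b q P : ℝ) (hκ : 0 < κ) (hα0 : 0 ≤ α) (hα1 : α < 1)
    (ha : 0 < a) (hb : 0 < b) (hP0 : 0 < P) (hPκ : P ≤ κ)
    (hPl : κ - α * |q| ≤ P) :
    κ * (q * (b ^ 2 - a ^ 2) + κ * (1 - α) ^ 2 * (b - a) ^ 2) ≤
      (P * (b ^ 2 - a ^ 2) + (if 0 ≤ q then b ^ 2 else a ^ 2) * q) *
        (κ * ((1 - α) * (2 * (Real.log b - Real.log a))) + α * q) := by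
  rcases le_or_gt 0 q with hq | hq
  · rw [if_pos hq]
    rw [abs_of_nonneg hq] at hPl
    exact edge_nonneg κ α a b q P hκ hα0 hα1 ha hb hq hP0 hPκ hPl
  · rw [if_neg (not_le.2 hq)]
    rw [abs_of_neg hq] at hPl
    have h := edge_nonneg κ α b a (-q) P hκ hα0 hα1 hb ha (by linarith) hP0 hPκ
      (by linarith)
    nlinarith [h]

/-- Edge inequality in scheme form. -/
lemma edge_flux (κ α q x y : ℝ) (B : ℝ → ℝ) (hκ : 0 < κ) (hB : H2 B) (hB3 : H3 B α)
    (hx : 0 < x) (hy : 0 < y) :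
    q * (y - x) + κ * (1 - α) ^ 2 * (Real.sqrt y - Real.sqrt x) ^ 2 ≤
      (Bk κ B |q| * (y - x) + (if 0 ≤ q then y else x) * q) *
        ((1 - α) * (Real.log y - Real.log x) + α / κ * q) := by
  obtain ⟨hα0, hα1, hB3'⟩ := hB3
  obtain ⟨a, haq⟩ : ∃ a, Real.sqrt x = a := ⟨_, rfl⟩
  obtain ⟨b, hbq⟩ : ∃ b, Real.sqrt y = b := ⟨_, rfl⟩
  rw [haq, hbq]
  have ha : 0 < a := haq ▸ Real.sqrt_pos.2 hx
  have hb : 0 < b := hbq ▸ Real.sqrt_pos.2 hy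
  have ha2 : a ^ 2 = x := by rw [← haq]; exact Real.sq_sqrt hx.le
  have hb2 : b ^ 2 = y := by rw [← hbq]; exact Real.sq_sqrt hy.le
  have hlog : Real.log y - Real.log x = 2 * (Real.log b - Real.log a) := by
    rw [← ha2, ← hb2, Real.log_pow, Real.log_pow]; push_cast; ring
  have hq0 : (0:ℝ) ≤ |q| / κ := by positivity
  have hP0 : 0 < Bk κ B |q| := mul_pos hκ (hB.2 _ hq0).1
  have hPκ : Bk κ B |q| ≤ κ := by
    have h := (hB.2 (|q| / κ) hq0).2
    have := mul_le_mul_of_nonneg_left h hκ.le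
    simpa [Bk] using this
  have hPl : κ - α * |q| ≤ Bk κ B |q| := by
    have h := hB3' (|q| / κ) hq0
    have h2 := mul_le_mul_of_nonneg_left h hκ.le
    have e : κ * (1 - α * (|q| / κ)) = κ - α * |q| := by field_simp
    rw [e] at h2
    simpa [Bk] using h2
  have main := edge_all κ α a b q (Bk κ B |q|) hκ hα0 hα1 ha hb hP0 hPκ hPl
  rw [ha2, hb2] at main
  rw [hlog]
  apply le_of_mul_le_mul_left _ hκ
  have egen : ∀ X T : ℝ, κ * (X * ((1 - α) * T + α / κ * q))
      = X * (κ * ((1 - α) * T) + α * q) := by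
    intro X T
    have hα' : α / κ * κ = α := div_mul_cancel₀ α hκ.ne'
    linear_combination (X * q) * hα'
  rw [egen]
  exact main

/-! ### Discrete combinatorics -/

variable {M : Fin d → ℕ}

lemma shift_shift (K : Cell M) (ℓ : Fin d) (s t : ℤ) :
    shift M (shift M K ℓ s) ℓ t = shift M K ℓ (s + t) := by
  funext m
  by_cases h : m = ℓ
  · subst h
    simp only [shift, Function.update_self]
    push_cast
    ring
  · simp only [shift, Function.update_of_ne h]

lemma shift_zero (K : Cell M) (ℓ : Fin d) : shift M K ℓ 0 = K := by
  funext m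
  by_cases h : m = ℓ
  · subst h; simp [shift]
  · simp [shift, Function.update_of_ne h]

/-- Shifting in direction `ℓ` is a bijection on cells. -/
def shiftEquiv (M : Fin d → ℕ) (ℓ : Fin d) (s : ℤ) : Cell M ≃ Cell M where
  toFun K := shift M K ℓ s
  invFun K := shift M K ℓ (-s)
  left_inv K := by
    show shift M (shift M K ℓ s) ℓ (-s) = K
    rw [shift_shift]; simp [shift_zero]
  right_inv K := by
    show shift M (shift M K ℓ (-s)) ℓ s = K
    rw [shift_shift]; simp [shift_zero]

lemma sum_shift [∀ ℓ, NeZero (M ℓ)] (ℓ : Fin d) (s : ℤ) (f : Cell M → ℝ) :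
    ∑ K : Cell M, f (shift M K ℓ s) = ∑ K : Cell M, f K :=
  Equiv.sum_comp (shiftEquiv M ℓ s) f

lemma mK_pos [∀ ℓ, NeZero (M ℓ)] : 0 < mK M := by
  apply Finset.prod_pos
  intro ℓ _
  have : (0:ℝ) < (M ℓ : ℝ) := by
    exact_mod_cast Nat.pos_of_ne_zero (NeZero.ne (M ℓ))
  positivity

lemma τ_nonneg [∀ ℓ, NeZero (M ℓ)] (ℓ : Fin d) : 0 ≤ τ M ℓ := by
  unfold τ
  have := mK_pos (M := M)
  positivity

lemma flux_antisymm (κ : ℝ) (B : ℝ → ℝ) (u p : Cell M → ℝ) (ℓ : Fin d) (K L : Cell M) :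
    flux M κ B u p ℓ L K = - flux M κ B u p ℓ K L := by
  have habs : |p K - p L| = |p L - p K| := abs_sub_comm _ _
  rcases lt_trichotomy (p L - p K) 0 with h | h | h
  · have h1 : (0:ℝ) ≤ p K - p L := by linarith
    have h2 : ¬ (0 ≤ p L - p K) := by linarith
    simp only [flux, upw, if_pos h1, if_neg h2, habs]
    ring
  · have h1 : p K - p L = 0 := by linarith
    simp [flux, upw, h, h1, habs]
    ring
  · have h1 : ¬ ((0:ℝ) ≤ p K - p L) := by linarith
    have h2 : (0:ℝ) ≤ p L - p K := by linarith
    simp only [flux, upw, if_pos h2, if_neg h1, habs]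
    ring

/-- Discrete summation by parts on the torus. -/
lemma sbp [∀ ℓ, NeZero (M ℓ)] (κ : ℝ) (B : ℝ → ℝ) (u p φ : Cell M → ℝ) :
    ∑ K : Cell M, fluxSum M κ B u p K * φ K
      = ∑ K : Cell M, ∑ ℓ : Fin d,
          flux M κ B u p ℓ K (shift M K ℓ 1) * (φ K - φ (shift M K ℓ 1)) := by
  unfold fluxSum
  simp only [Finset.sum_mul, add_mul]
  rw [Finset.sum_comm]
  conv_rhs => rw [Finset.sum_comm]
  apply Finset.sum_congr rfl
  intro ℓ _
  have hre : ∑ K : Cell M, flux M κ B u p ℓ K (shift M K ℓ (-1)) * φ K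
      = ∑ K : Cell M, - (flux M κ B u p ℓ K (shift M K ℓ 1) * φ (shift M K ℓ 1)) := by
    rw [← sum_shift (M := M) ℓ 1
      (fun K => flux M κ B u p ℓ K (shift M K ℓ (-1)) * φ K)]
    apply Finset.sum_congr rfl
    intro K _
    have e1 : shift M (shift M K ℓ 1) ℓ (-1) = K := by
      rw [shift_shift]; simp [shift_zero]
    rw [e1, flux_antisymm]
    ring
  rw [Finset.sum_add_distrib, hre]
  rw [← Finset.sum_add_distrib]
  apply Finset.sum_congr rfl
  intro K _
  ring



/-! ### Scheme and entropy machinery -/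

lemma step_sum [∀ ℓ, NeZero (M ℓ)] (κ Δt : ℝ) (B : ℝ → ℝ) (hΔt : Δt ≠ 0)
    (v u p : Cell M → ℝ) (hs : Step M κ Δt B v u p) (φ : Cell M → ℝ) :
    ∑ K : Cell M, mK M * ((u K - v K) * φ K)
      = -Δt * ∑ K : Cell M, fluxSum M κ B u p K * φ K := by
  rw [Finset.mul_sum]
  apply Finset.sum_congr rfl
  intro K _
  have h := hs K
  have h3 : mK M * (u K - v K) / Δt = -fluxSum M κ B u p K := by linarith
  have h2 : mK M * (u K - v K) = -Δt * fluxSum M κ B u p K := by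
    field_simp at h3
    linarith
  calc mK M * ((u K - v K) * φ K) = (mK M * (u K - v K)) * φ K := by ring
    _ = (-Δt * fluxSum M κ B u p K) * φ K := by rw [h2]
    _ = -Δt * (fluxSum M κ B u p K * φ K) := by ring

lemma telescope (f : ℕ → ℝ) (N : ℕ) :
    ∑ k ∈ Finset.Icc 1 N, (f k - f (k - 1)) = f N - f 0 := by
  induction N with
  | zero => simp
  | succ m ih =>
    rw [Finset.sum_Icc_succ_top (by omega : 1 ≤ m + 1), ih]
    simp only [Nat.add_sub_cancel]
    ring

lemma philog {x y : ℝ} (hx : 0 < x) (hy : 0 ≤ y) :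
    x * (Real.log x - 1) - y * (Real.log y - 1) ≤ (x - y) * Real.log x := by
  rcases eq_or_lt_of_le hy with h0 | h0
  · rw [← h0]; simp; nlinarith [hx]
  · linarith [log_lb hx h0]

lemma hb_conv [∀ ℓ, NeZero (M ℓ)] {n : ℕ} (un v : Fin n → Cell M → ℝ)
    (hun : ∀ i K, 0 < un i K) (hv : ∀ i K, 0 ≤ v i K) :
    HB M un - HB M v ≤
      ∑ i, ∑ K : Cell M, mK M * ((un i K - v i K) * Real.log (un i K)) := by
  unfold HB
  rw [← Finset.sum_sub_distrib]
  apply Finset.sum_le_sum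
  intro i _
  rw [← Finset.sum_sub_distrib]
  apply Finset.sum_le_sum
  intro K _
  have h := philog (hun i K) (hv i K)
  have hm := mK_pos (M := M)
  nlinarith [mul_le_mul_of_nonneg_left h hm.le]

/-- The bilinear form associated to a discrete kernel. -/
noncomputable def Phi (M : Fin d → ℕ) [∀ ℓ, NeZero (M ℓ)] {n : ℕ}
    (Wd : Fin n → Fin n → Cell M → Cell M → ℝ) (c e : Fin n → Cell M → ℝ) : ℝ :=
  ∑ i, ∑ j, ∑ K : Cell M, ∑ J : Cell M, mK M * mK M * Wd i j K J * c i K * e j J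

lemma HR_eq [∀ ℓ, NeZero (M ℓ)] {n : ℕ}
    (Wd : Fin n → Fin n → Cell M → Cell M → ℝ) (u : Fin n → Cell M → ℝ) :
    HR M Wd u = (1/2) * Phi M Wd u u := rfl

lemma Phi_comm [∀ ℓ, NeZero (M ℓ)] {n : ℕ}
    (Wd : Fin n → Fin n → Cell M → Cell M → ℝ)
    (hsymd : ∀ i j K J, Wd i j K J = Wd j i J K) (c e : Fin n → Cell M → ℝ) :
    Phi M Wd c e = Phi M Wd e c := by
  unfold Phi
  rw [Finset.sum_comm]
  apply Finset.sum_congr rfl; intro i _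
  apply Finset.sum_congr rfl; intro j _
  rw [Finset.sum_comm]
  apply Finset.sum_congr rfl; intro K _
  apply Finset.sum_congr rfl; intro J _
  rw [hsymd j i J K]
  ring

lemma Phi_sub_left [∀ ℓ, NeZero (M ℓ)] {n : ℕ}
    (Wd : Fin n → Fin n → Cell M → Cell M → ℝ) (c e f : Fin n → Cell M → ℝ) :
    Phi M Wd (fun i K => c i K - e i K) f = Phi M Wd c f - Phi M Wd e f := by
  unfold Phi
  simp only [← Finset.sum_sub_distrib]
  apply Finset.sum_congr rfl; intro i _
  apply Finset.sum_congr rfl; intro j _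
  apply Finset.sum_congr rfl; intro K _
  apply Finset.sum_congr rfl; intro J _
  ring

lemma Phi_sub_right [∀ ℓ, NeZero (M ℓ)] {n : ℕ}
    (Wd : Fin n → Fin n → Cell M → Cell M → ℝ) (c e f : Fin n → Cell M → ℝ) :
    Phi M Wd f (fun i K => c i K - e i K) = Phi M Wd f c - Phi M Wd f e := by
  unfold Phi
  simp only [← Finset.sum_sub_distrib]
  apply Finset.sum_congr rfl; intro i _
  apply Finset.sum_congr rfl; intro j _
  apply Finset.sum_congr rfl; intro K _
  apply Finset.sum_congr rfl; intro J _
  ring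

lemma pot_sum [∀ ℓ, NeZero (M ℓ)] {n : ℕ}
    (Wd : Fin n → Fin n → Cell M → Cell M → ℝ) (c u : Fin n → Cell M → ℝ) :
    ∑ i, ∑ K : Cell M, mK M * (c i K * pot M Wd u i K) = Phi M Wd c u := by
  unfold pot Phi
  apply Finset.sum_congr rfl; intro i _
  calc ∑ K : Cell M, mK M * (c i K * ∑ j, ∑ J : Cell M, mK M * Wd i j K J * u j J)
      = ∑ K : Cell M, ∑ j, ∑ J : Cell M, mK M * mK M * Wd i j K J * c i K * u j J := by
        apply Finset.sum_congr rfl; intro K _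
        simp only [Finset.mul_sum]
        apply Finset.sum_congr rfl; intro j _
        apply Finset.sum_congr rfl; intro J _
        ring
    _ = ∑ j, ∑ K : Cell M, ∑ J : Cell M, mK M * mK M * Wd i j K J * c i K * u j J :=
        Finset.sum_comm

lemma hr_conv [∀ ℓ, NeZero (M ℓ)] {n : ℕ}
    (Wd : Fin n → Fin n → Cell M → Cell M → ℝ)
    (hsymd : ∀ i j K J, Wd i j K J = Wd j i J K)
    (hpsdd : ∀ c : Fin n → Cell M → ℝ, 0 ≤ Phi M Wd c c)
    (un v : Fin n → Cell M → ℝ) :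
    HR M Wd un - HR M Wd v ≤
      ∑ i, ∑ K : Cell M, mK M * ((un i K - v i K) * pot M Wd un i K) := by
  have hps := pot_sum (M := M) Wd (fun i K => un i K - v i K) un
  rw [hps, HR_eq, HR_eq]
  have e1 : Phi M Wd (fun i K => un i K - v i K) un
      = Phi M Wd un un - Phi M Wd v un := Phi_sub_left ..
  have hz := hpsdd (fun i K => un i K - v i K)
  have e2 : Phi M Wd (fun i K => un i K - v i K) (fun i K => un i K - v i K)
      = Phi M Wd un (fun i K => un i K - v i K)
        - Phi M Wd v (fun i K => un i K - v i K) := Phi_sub_left ..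
  have e3 : Phi M Wd un (fun i K => un i K - v i K)
      = Phi M Wd un un - Phi M Wd un v := Phi_sub_right ..
  have e4 : Phi M Wd v (fun i K => un i K - v i K)
      = Phi M Wd v un - Phi M Wd v v := Phi_sub_right ..
  have c1 : Phi M Wd un v = Phi M Wd v un := Phi_comm Wd hsymd un v
  rw [e2, e3, e4, c1] at hz
  rw [e1]
  linarith

lemma pot_shift [∀ ℓ, NeZero (M ℓ)] {n : ℕ}
    (Wd : Fin n → Fin n → Cell M → Cell M → ℝ)
    (htrans : ∀ i j (ℓ : Fin d) (K J : Cell M),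
      Wd i j (shift M K ℓ 1) J = Wd i j K (shift M J ℓ (-1)))
    (u : Fin n → Cell M → ℝ) (i : Fin n) (ℓ : Fin d) (K : Cell M) :
    pot M Wd u i (shift M K ℓ 1)
      = ∑ j, ∑ J : Cell M, mK M * Wd i j K J * u j (shift M J ℓ 1) := by
  unfold pot
  apply Finset.sum_congr rfl; intro j _
  calc ∑ J : Cell M, mK M * Wd i j (shift M K ℓ 1) J * u j J
      = ∑ J : Cell M, mK M * Wd i j K (shift M J ℓ (-1)) * u j J := by
        apply Finset.sum_congr rfl; intro J _
        rw [htrans]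
    _ = ∑ J : Cell M, mK M * Wd i j K (shift M (shift M J ℓ 1) ℓ (-1)) * u j (shift M J ℓ 1) :=
        (sum_shift (M := M) ℓ 1 (fun J => mK M * Wd i j K (shift M J ℓ (-1)) * u j J)).symm
    _ = ∑ J : Cell M, mK M * Wd i j K J * u j (shift M J ℓ 1) := by
        apply Finset.sum_congr rfl; intro J _
        have e0 : shift M (shift M J ℓ 1) ℓ (-1) = J := by
          rw [shift_shift]
          have e1 : (1 : ℤ) + -1 = 0 := by ring
          rw [e1, shift_zero]
        rw [e0]

lemma xc_nonneg [∀ ℓ, NeZero (M ℓ)] {n : ℕ}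
    (Wd : Fin n → Fin n → Cell M → Cell M → ℝ)
    (hpsdd : ∀ c : Fin n → Cell M → ℝ, 0 ≤ Phi M Wd c c)
    (htrans : ∀ i j (ℓ : Fin d) (K J : Cell M),
      Wd i j (shift M K ℓ 1) J = Wd i j K (shift M J ℓ (-1)))
    (u : Fin n → Cell M → ℝ) :
    0 ≤ ∑ i, ∑ K : Cell M, ∑ ℓ : Fin d, τ M ℓ *
        ((pot M Wd u i (shift M K ℓ 1) - pot M Wd u i K)
          * (u i (shift M K ℓ 1) - u i K)) := by
  have swap : (∑ i, ∑ K : Cell M, ∑ ℓ : Fin d, τ M ℓ *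
        ((pot M Wd u i (shift M K ℓ 1) - pot M Wd u i K)
          * (u i (shift M K ℓ 1) - u i K)))
      = ∑ ℓ : Fin d, ∑ i, ∑ K : Cell M, τ M ℓ *
        ((pot M Wd u i (shift M K ℓ 1) - pot M Wd u i K)
          * (u i (shift M K ℓ 1) - u i K)) := by
    calc (∑ i, ∑ K : Cell M, ∑ ℓ : Fin d, τ M ℓ *
        ((pot M Wd u i (shift M K ℓ 1) - pot M Wd u i K)
          * (u i (shift M K ℓ 1) - u i K)))
        = ∑ i, ∑ ℓ : Fin d, ∑ K : Cell M, τ M ℓ *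
        ((pot M Wd u i (shift M K ℓ 1) - pot M Wd u i K)
          * (u i (shift M K ℓ 1) - u i K)) :=
          Finset.sum_congr rfl (fun i _ => Finset.sum_comm)
      _ = _ := Finset.sum_comm
  rw [swap]
  apply Finset.sum_nonneg
  intro ℓ _
  have hdiff : ∀ i K, pot M Wd u i (shift M K ℓ 1) - pot M Wd u i K
      = pot M Wd (fun j J => u j (shift M J ℓ 1) - u j J) i K := by
    intro i K
    rw [pot_shift Wd htrans]
    unfold pot
    rw [← Finset.sum_sub_distrib]
    apply Finset.sum_congr rfl; intro j _
    rw [← Finset.sum_sub_distrib]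
    apply Finset.sum_congr rfl; intro J _
    ring
  have e := pot_sum (M := M) Wd (fun j J => u j (shift M J ℓ 1) - u j J)
    (fun j J => u j (shift M J ℓ 1) - u j J)
  have hm := mK_pos (M := M)
  have h1 : ∑ i, ∑ K : Cell M, τ M ℓ *
        ((pot M Wd u i (shift M K ℓ 1) - pot M Wd u i K)
          * (u i (shift M K ℓ 1) - u i K))
      = (τ M ℓ / mK M) * Phi M Wd (fun j J => u j (shift M J ℓ 1) - u j J)
          (fun j J => u j (shift M J ℓ 1) - u j J) := by
    rw [← e, Finset.mul_sum]
    apply Finset.sum_congr rfl; intro i _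
    rw [Finset.mul_sum]
    apply Finset.sum_congr rfl; intro K _
    rw [hdiff i K]
    field_simp
  rw [h1]
  exact mul_nonneg (div_nonneg (τ_nonneg ℓ) hm.le) (hpsdd _)



set_option maxHeartbeats 1000000 in
/-- One-step entropy dissipation inequality. -/
lemma per_step [∀ ℓ, NeZero (M ℓ)] {n : ℕ} (κ Δt α : ℝ) (B : ℝ → ℝ)
    (hκ : 0 < κ) (hΔt : 0 < Δt) (hB : H2 B) (hB3 : H3 B α)
    (Wd : Fin n → Fin n → Cell M → Cell M → ℝ)
    (hsymd : ∀ i j K J, Wd i j K J = Wd j i J K)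
    (hpsdd : ∀ c : Fin n → Cell M → ℝ, 0 ≤ Phi M Wd c c)
    (htrans : ∀ i j (ℓ : Fin d) (K J : Cell M),
      Wd i j (shift M K ℓ 1) J = Wd i j K (shift M J ℓ (-1)))
    (v un : Fin n → Cell M → ℝ)
    (hun : ∀ i K, 0 < un i K) (hv : ∀ i K, 0 ≤ v i K)
    (hstep : ∀ i, Step M κ Δt B (v i) (un i) (pot M Wd un i)) :
    (1 - α) * (HB M un - HB M v) + (α / κ) * (HR M Wd un - HR M Wd v)
      + κ * (1 - α) ^ 2 * (Δt * Fisher M un) ≤ 0 := by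
  obtain ⟨hα0, hα1, hB3'⟩ := hB3
  -- ψ is the discrete test function
  have hHB := hb_conv (M := M) un v hun hv
  have hHR := hr_conv (M := M) Wd hsymd hpsdd un v
  -- combined entropy inequality
  have hcomb : (1 - α) * (HB M un - HB M v) + (α / κ) * (HR M Wd un - HR M Wd v) ≤
      ∑ i, ∑ K : Cell M, mK M * ((un i K - v i K) *
        ((1 - α) * Real.log (un i K) + α / κ * pot M Wd un i K)) := by
    have b1 := mul_le_mul_of_nonneg_left hHB (by linarith : (0:ℝ) ≤ 1 - α)
    have b2 := mul_le_mul_of_nonneg_left hHR (by positivity : (0:ℝ) ≤ α / κ)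
    have e : (∑ i, ∑ K : Cell M, mK M * ((un i K - v i K) *
        ((1 - α) * Real.log (un i K) + α / κ * pot M Wd un i K)))
        = (1 - α) * (∑ i, ∑ K : Cell M, mK M * ((un i K - v i K) * Real.log (un i K)))
          + (α / κ) * (∑ i, ∑ K : Cell M,
              mK M * ((un i K - v i K) * pot M Wd un i K)) := by
      rw [Finset.mul_sum, Finset.mul_sum, ← Finset.sum_add_distrib]
      apply Finset.sum_congr rfl; intro i _
      rw [Finset.mul_sum, Finset.mul_sum, ← Finset.sum_add_distrib]
      apply Finset.sum_congr rfl; intro K _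
      ring
    rw [e]
    linarith
  -- scheme: test with ψ
  have hschm : (∑ i, ∑ K : Cell M, mK M * ((un i K - v i K) *
        ((1 - α) * Real.log (un i K) + α / κ * pot M Wd un i K)))
      = -Δt * ∑ i, ∑ K : Cell M,
          fluxSum M κ B (un i) (pot M Wd un i) K *
            ((1 - α) * Real.log (un i K) + α / κ * pot M Wd un i K) := by
    rw [Finset.mul_sum]
    apply Finset.sum_congr rfl; intro i _
    exact step_sum κ Δt B hΔt.ne' (v i) (un i) (pot M Wd un i) (hstep i)
      (fun K => (1 - α) * Real.log (un i K) + α / κ * pot M Wd un i K)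
  -- lower bound for the dissipation
  have hdissip : (∑ i, ∑ K : Cell M, ∑ ℓ : Fin d, τ M ℓ *
        ((pot M Wd un i (shift M K ℓ 1) - pot M Wd un i K)
            * (un i (shift M K ℓ 1) - un i K)
          + κ * (1 - α) ^ 2 *
            (Real.sqrt (un i (shift M K ℓ 1)) - Real.sqrt (un i K)) ^ 2))
      ≤ ∑ i, ∑ K : Cell M,
          fluxSum M κ B (un i) (pot M Wd un i) K *
            ((1 - α) * Real.log (un i K) + α / κ * pot M Wd un i K) := by
    apply Finset.sum_le_sum
    intro i _
    rw [sbp]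
    apply Finset.sum_le_sum
    intro K _
    apply Finset.sum_le_sum
    intro ℓ _
    -- per-edge inequality
    have h := edge_flux κ α (pot M Wd un i (shift M K ℓ 1) - pot M Wd un i K)
      (un i K) (un i (shift M K ℓ 1)) B hκ hB ⟨hα0, hα1, hB3'⟩
      (hun i K) (hun i (shift M K ℓ 1))
    have hτ := τ_nonneg (M := M) ℓ
    have h2 := mul_le_mul_of_nonneg_left h hτ
    have e : flux M κ B (un i) (pot M Wd un i) ℓ K (shift M K ℓ 1) *
        (((1 - α) * Real.log (un i K) + α / κ * pot M Wd un i K)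
          - ((1 - α) * Real.log (un i (shift M K ℓ 1))
              + α / κ * pot M Wd un i (shift M K ℓ 1)))
        = τ M ℓ * ((Bk κ B |pot M Wd un i (shift M K ℓ 1) - pot M Wd un i K| *
              (un i (shift M K ℓ 1) - un i K)
            + (if 0 ≤ pot M Wd un i (shift M K ℓ 1) - pot M Wd un i K
                then un i (shift M K ℓ 1) else un i K) *
              (pot M Wd un i (shift M K ℓ 1) - pot M Wd un i K)) *
          ((1 - α) * (Real.log (un i (shift M K ℓ 1)) - Real.log (un i K))
            + α / κ * (pot M Wd un i (shift M K ℓ 1) - pot M Wd un i K))) := by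
      simp only [flux, upw]
      ring
    rw [e]
    calc τ M ℓ * ((pot M Wd un i (shift M K ℓ 1) - pot M Wd un i K)
            * (un i (shift M K ℓ 1) - un i K)
          + κ * (1 - α) ^ 2 *
            (Real.sqrt (un i (shift M K ℓ 1)) - Real.sqrt (un i K)) ^ 2)
        = τ M ℓ * ((pot M Wd un i (shift M K ℓ 1) - pot M Wd un i K)
            * (un i (shift M K ℓ 1) - un i K)
          + κ * (1 - α) ^ 2 *
            (Real.sqrt (un i (shift M K ℓ 1)) - Real.sqrt (un i K)) ^ 2) := rfl
      _ ≤ _ := h2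
  -- split the dissipation into cross term and Fisher information
  have hsplit : (∑ i, ∑ K : Cell M, ∑ ℓ : Fin d, τ M ℓ *
        ((pot M Wd un i (shift M K ℓ 1) - pot M Wd un i K)
            * (un i (shift M K ℓ 1) - un i K)
          + κ * (1 - α) ^ 2 *
            (Real.sqrt (un i (shift M K ℓ 1)) - Real.sqrt (un i K)) ^ 2))
      = (∑ i, ∑ K : Cell M, ∑ ℓ : Fin d, τ M ℓ *
          ((pot M Wd un i (shift M K ℓ 1) - pot M Wd un i K)
            * (un i (shift M K ℓ 1) - un i K)))
        + κ * (1 - α) ^ 2 * Fisher M un := by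
    unfold Fisher
    rw [Finset.mul_sum, ← Finset.sum_add_distrib]
    apply Finset.sum_congr rfl; intro i _
    rw [Finset.mul_sum, ← Finset.sum_add_distrib]
    apply Finset.sum_congr rfl; intro K _
    rw [Finset.mul_sum, ← Finset.sum_add_distrib]
    apply Finset.sum_congr rfl; intro ℓ _
    ring
  have hxc := xc_nonneg (M := M) Wd hpsdd htrans un
  -- put everything together
  have hF : κ * (1 - α) ^ 2 * Fisher M un ≤
      ∑ i, ∑ K : Cell M,
          fluxSum M κ B (un i) (pot M Wd un i) K *
            ((1 - α) * Real.log (un i K) + α / κ * pot M Wd un i K) := by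
    rw [hsplit] at hdissip
    linarith
  have hmul := mul_le_mul_of_nonneg_left hF hΔt.le
  calc (1 - α) * (HB M un - HB M v) + (α / κ) * (HR M Wd un - HR M Wd v)
        + κ * (1 - α) ^ 2 * (Δt * Fisher M un)
      ≤ (∑ i, ∑ K : Cell M, mK M * ((un i K - v i K) *
          ((1 - α) * Real.log (un i K) + α / κ * pot M Wd un i K)))
        + κ * (1 - α) ^ 2 * (Δt * Fisher M un) := by linarith
    _ = -Δt * (∑ i, ∑ K : Cell M,
          fluxSum M κ B (un i) (pot M Wd un i) K *
            ((1 - α) * Real.log (un i K) + α / κ * pot M Wd un i K))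
        + Δt * (κ * (1 - α) ^ 2 * Fisher M un) := by rw [hschm]; ring
    _ ≤ 0 := by linarith [hmul]



/-! ### Measure-theoretic properties of the discrete kernels -/

section MeasureFacts

instance : IsProbabilityMeasure (volume : Measure (AddCircle (1:ℝ))) := by
  constructor
  rw [AddCircle.measure_univ]
  norm_num

instance : IsProbabilityMeasure (volume : Measure (Td d)) := by
  rw [MeasureTheory.volume_pi]
  infer_instance

/-- Representative in `[0,1)` of a point of the circle. -/
noncomputable def lift (z : AddCircle (1:ℝ)) : ℝ := (AddCircle.equivIco 1 0 z : ℝ)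

lemma measurable_lift : Measurable (lift) :=
  measurable_subtype_coe.comp (AddCircle.measurableEquivIco (1:ℝ) 0).measurable

lemma lift_coe (t : ℝ) : lift ((t : ℝ) : AddCircle (1:ℝ)) = Int.fract t := by
  unfold lift
  rw [AddCircle.coe_equivIco_mk_apply]
  norm_num

lemma coe_lift (z : AddCircle (1:ℝ)) : ((lift z : ℝ) : AddCircle (1:ℝ)) = z := by
  calc ((lift z : ℝ) : AddCircle (1:ℝ))
      = (AddCircle.equivIco (1:ℝ) 0).symm (AddCircle.equivIco (1:ℝ) 0 z) := rfl
    _ = z := (AddCircle.equivIco (1:ℝ) 0).symm_apply_apply z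

lemma arc_eq {c e : ℝ} (hc : 0 ≤ c) (he : e ≤ 1) :
    ((fun t : ℝ => (t : AddCircle (1:ℝ))) '' Set.Ico c e) = lift ⁻¹' Set.Ico c e := by
  ext z
  constructor
  · rintro ⟨t, ht, rfl⟩
    have h1 : Int.fract t = t :=
      Int.fract_eq_self.mpr ⟨le_trans hc ht.1, lt_of_lt_of_le ht.2 he⟩
    have : lift ((t : ℝ) : AddCircle (1:ℝ)) = t := by rw [lift_coe, h1]
    simp only [Set.mem_preimage, this]
    exact ht
  · intro hz
    exact ⟨lift z, hz, coe_lift z⟩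

/-- The factor of `QK` in one coordinate. -/
noncomputable def facSet (m : ℕ) (c : ZMod m) : Set (AddCircle (1:ℝ)) :=
  (fun t : ℝ => (t : AddCircle (1:ℝ))) ''
    Set.Ico ((c.val : ℝ) / m) (((c.val : ℝ) + 1) / m)

lemma facSet_measurable (m : ℕ) [NeZero m] (c : ZMod m) :
    MeasurableSet (facSet m c) := by
  have hm : (0:ℝ) < m := by exact_mod_cast Nat.pos_of_ne_zero (NeZero.ne m)
  have h1 : (0:ℝ) ≤ (c.val : ℝ) / m := by positivity
  have h2 : ((c.val : ℝ) + 1) / m ≤ 1 := by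
    rw [div_le_one hm]
    have := ZMod.val_lt c
    exact_mod_cast this
  rw [facSet, arc_eq h1 h2]
  exact measurable_lift measurableSet_Ico

lemma QK_eq_pi (K : Cell M) : QK M K = Set.univ.pi fun ℓ => facSet (M ℓ) (K ℓ) := rfl

lemma QK_measurable [∀ ℓ, NeZero (M ℓ)] (K : Cell M) : MeasurableSet (QK M K) := by
  rw [QK_eq_pi]
  exact MeasurableSet.univ_pi fun ℓ => facSet_measurable (M ℓ) (K ℓ)

lemma mp_sub : MeasurePreserving (fun z : Td d × Td d => z.1 - z.2)
    ((volume : Measure (Td d)).prod volume) volume := by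
  have h1 := measurePreserving_sub_prod (volume : Measure (Td d)) (volume : Measure (Td d))
  have h2 : MeasurePreserving (Prod.fst : Td d × Td d → Td d)
      ((volume : Measure (Td d)).prod volume) volume := by
    constructor
    · exact measurable_fst
    · rw [Measure.map_fst_prod]
      simp
  exact h2.comp h1

lemma integrable_sub_pair {W : Td d → ℝ} (hW : Integrable W) :
    Integrable (fun z : Td d × Td d => W (z.1 - z.2))
      ((volume : Measure (Td d)).prod volume) :=
  ((mp_sub (d := d)).integrable_comp hW.aestronglyMeasurable).mpr hW

lemma wdisc_prod [∀ ℓ, NeZero (M ℓ)] (W : Td d → ℝ) (hW : Integrable W) (K J : Cell M) :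
    mK M * mK M * Wdisc M W K J
      = ∫ z in (QK M K) ×ˢ (QK M J), W (z.1 - z.2)
          ∂((volume : Measure (Td d)).prod volume) := by
  unfold Wdisc
  rw [MeasureTheory.setIntegral_prod _ ((integrable_sub_pair hW).integrableOn)]
  have hm := mK_pos (M := M)
  field_simp

/-- The lattice translation vector in direction `ℓ`. -/
noncomputable def tvec (M : Fin d → ℕ) (ℓ : Fin d) : Td d :=
  fun m => if m = ℓ then (((M ℓ : ℝ)⁻¹ : ℝ) : AddCircle (1:ℝ)) else 0

lemma arc_period (a b : ℝ) :
    (fun t : ℝ => (t : AddCircle (1:ℝ))) '' Set.Ico (1 + a) (1 + b)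
      = (fun t : ℝ => (t : AddCircle (1:ℝ))) '' Set.Ico a b := by
  ext z
  constructor
  · rintro ⟨t, ht, rfl⟩
    refine ⟨t - 1, ⟨by linarith [ht.1], by linarith [ht.2]⟩, ?_⟩
    have := AddCircle.coe_add_period (1:ℝ) (t - 1)
    simpa using this
  · rintro ⟨t, ht, rfl⟩
    refine ⟨1 + t, ⟨by linarith [ht.1], by linarith [ht.2]⟩, ?_⟩
    have := AddCircle.coe_add_period (1:ℝ) t
    rw [add_comm] at this
    simpa using this

lemma facSet_shift (m : ℕ) [NeZero m] (c : ZMod m) :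
    (fun z : AddCircle (1:ℝ) => (((m : ℝ)⁻¹ : ℝ) : AddCircle (1:ℝ)) + z) ⁻¹'
        facSet m (c + 1) = facSet m c := by
  have hm : (0:ℝ) < m := by exact_mod_cast Nat.pos_of_ne_zero (NeZero.ne m)
  have himg : facSet m (c + 1)
      = (fun z : AddCircle (1:ℝ) => (((m : ℝ)⁻¹ : ℝ) : AddCircle (1:ℝ)) + z) ''
          facSet m c := by
    unfold facSet
    rw [Set.image_image]
    have e : (fun t : ℝ => (((m : ℝ)⁻¹ : ℝ) : AddCircle (1:ℝ)) + ((t : ℝ) : AddCircle (1:ℝ)))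
        = fun t : ℝ => (((m : ℝ)⁻¹ + t : ℝ) : AddCircle (1:ℝ)) := by
      funext t
      rw [AddCircle.coe_add]
    rw [e]
    have e2 : (fun t : ℝ => (((m : ℝ)⁻¹ + t : ℝ) : AddCircle (1:ℝ))) ''
          Set.Ico ((c.val : ℝ) / m) (((c.val : ℝ) + 1) / m)
        = (fun t : ℝ => (t : AddCircle (1:ℝ))) ''
            Set.Ico ((m : ℝ)⁻¹ + (c.val : ℝ) / m) ((m : ℝ)⁻¹ + ((c.val : ℝ) + 1) / m) := by
      rw [← Set.image_const_add_Ico ((m:ℝ)⁻¹), ← Set.image_image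
        (fun t : ℝ => (t : AddCircle (1:ℝ))) (fun t : ℝ => (m : ℝ)⁻¹ + t)]
    rw [e2]
    by_cases hm1 : m = 1
    · subst hm1
      have hc1 : (c + 1).val = c.val := by
        have : c + 1 = c := Subsingleton.elim _ _
        rw [this]
      have hc0 : c.val = 0 := by
        have : c = 0 := Subsingleton.elim _ _
        rw [this]; rfl
      rw [hc1, hc0]
      have e3 : ((1:ℕ) : ℝ)⁻¹ + ((0:ℕ) : ℝ) / (1:ℕ) = 1 + ((0:ℕ):ℝ) / (1:ℕ) := by norm_num
      have e4 : ((1:ℕ) : ℝ)⁻¹ + (((0:ℕ) : ℝ) + 1) / (1:ℕ) = 1 + (((0:ℕ):ℝ) + 1) / (1:ℕ) := by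
        norm_num
      rw [e3, e4, arc_period]
    · have hm2 : 1 < m := by have := NeZero.ne m; omega
      haveI : Fact (1 < m) := ⟨hm2⟩
      have h1v : (1 : ZMod m).val = 1 := ZMod.val_one m
      have hval : (c + 1).val = (c.val + 1) % m := by
        rw [ZMod.val_add, h1v]
      rcases lt_or_eq_of_le (Nat.succ_le_of_lt (ZMod.val_lt c)) with hlt | heq
      · have hv2 : (c + 1).val = c.val + 1 := by
          rw [hval, Nat.mod_eq_of_lt hlt]
        rw [hv2]
        have e5 : (((c.val + 1 : ℕ) : ℝ)) / m = (m : ℝ)⁻¹ + (c.val : ℝ) / m := by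
          push_cast; field_simp; ring
        have e6 : (((c.val + 1 : ℕ) : ℝ) + 1) / m = (m : ℝ)⁻¹ + ((c.val : ℝ) + 1) / m := by
          push_cast; field_simp; ring
        rw [e5, e6]
      · have hv2 : (c + 1).val = 0 := by
          have h' : c.val + 1 = m := heq
          have hz : (c.val + 1) % m = 0 := by rw [h', Nat.mod_self]
          rw [hval, hz]
        rw [hv2]
        have hcv : (c.val : ℝ) = (m : ℝ) - 1 := by
          have : ((c.val : ℕ) : ℝ) + 1 = (m : ℝ) := by exact_mod_cast congrArg (Nat.cast : ℕ → ℝ) heq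
          linarith
        have e1 : (m : ℝ)⁻¹ + (c.val : ℝ) / m = 1 + ((0:ℕ) : ℝ) / m := by
          rw [hcv]; field_simp; push_cast; ring
        have e2' : (m : ℝ)⁻¹ + ((c.val : ℝ) + 1) / m = 1 + (((0:ℕ) : ℝ) + 1) / m := by
          rw [hcv]; field_simp; ring
        rw [e1, e2', arc_period]
  rw [himg, Set.preimage_image_eq _ (add_right_injective _)]

end MeasureFacts

lemma prod_meas : ∀ {A B : Set (Td d)}, MeasurableSet A → MeasurableSet B →
    MeasurableSet (A ×ˢ B) := fun hA hB => hA.prod hB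

lemma wdisc_symm [∀ ℓ, NeZero (M ℓ)] {n : ℕ} (W : Fin n → Fin n → Td d → ℝ)
    (hW : ∀ i j, MeasureTheory.Integrable (W i j))
    (hsym : ∀ i j, ∀ᵐ x : Td d, W i j x = W j i (-x)) :
    ∀ (i j : Fin n) (K J : Cell M), Wdisc M (W i j) K J = Wdisc M (W j i) J K := by
  intro i j K J
  have hne : mK M * mK M ≠ 0 := (mul_pos (mK_pos (M := M)) (mK_pos (M := M))).ne'
  apply mul_left_cancel₀ hne
  rw [wdisc_prod _ (hW i j), wdisc_prod _ (hW j i)]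
  have hae : (fun z : Td d × Td d => W i j (z.1 - z.2))
      =ᵐ[(volume : Measure (Td d)).prod volume] (fun z => W j i (z.2 - z.1)) := by
    have h2 := Measure.QuasiMeasurePreserving.ae_eq_comp
      (mp_sub (d := d)).quasiMeasurePreserving (hsym i j)
    have h3 : ((fun x : Td d => W j i (-x)) ∘ fun z : Td d × Td d => z.1 - z.2)
        = fun z : Td d × Td d => W j i (z.2 - z.1) := by
      funext z
      simp [neg_sub]
    rw [h3] at h2
    exact h2
  have step1 : (∫ z in QK M K ×ˢ QK M J, W i j (z.1 - z.2)
        ∂((volume : Measure (Td d)).prod volume))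
      = ∫ z in QK M K ×ˢ QK M J, W j i (z.2 - z.1)
        ∂((volume : Measure (Td d)).prod volume) := by
    apply setIntegral_congr_ae (prod_meas (QK_measurable K) (QK_measurable J))
    exact hae.mono fun z hz _ => hz
  rw [step1]
  have hswap : MeasurePreserving (Prod.swap : Td d × Td d → Td d × Td d)
      ((volume : Measure (Td d)).prod volume) ((volume : Measure (Td d)).prod volume) :=
    Measure.measurePreserving_swap
  have hmeas : AEStronglyMeasurable (fun z : Td d × Td d => W j i (z.1 - z.2))
      (Measure.map Prod.swap ((volume : Measure (Td d)).prod volume)) := by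
    rw [hswap.map_eq]
    exact (integrable_sub_pair (hW j i)).aestronglyMeasurable
  have step2 : (∫ z in QK M J ×ˢ QK M K, W j i (z.1 - z.2)
        ∂((volume : Measure (Td d)).prod volume))
      = ∫ z in Prod.swap ⁻¹' (QK M J ×ˢ QK M K), W j i ((Prod.swap z).1 - (Prod.swap z).2)
        ∂((volume : Measure (Td d)).prod volume) := by
    conv_lhs => rw [← hswap.map_eq]
    exact setIntegral_map (prod_meas (QK_measurable J) (QK_measurable K)) hmeas
      hswap.measurable.aemeasurable
  rw [step2, Set.preimage_swap_prod]
  rfl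

set_option maxHeartbeats 1000000 in
lemma wdisc_psd [∀ ℓ, NeZero (M ℓ)] {n : ℕ} (W : Fin n → Fin n → Td d → ℝ)
    (hW : ∀ i j, MeasureTheory.Integrable (W i j))
    (hpsd : ∀ v : Fin n → Td d → ℝ, (∀ i, MeasureTheory.MemLp (v i) 2) →
      0 ≤ ∑ i, ∑ j, ∫ x : Td d, ∫ y : Td d, W i j (x - y) * v i x * v j y) :
    ∀ c : Fin n → Cell M → ℝ, 0 ≤ Phi M (fun i j => Wdisc M (W i j)) c c := by
  intro c
  have hvmem : ∀ i : Fin n, MemLp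
      (fun x : Td d => ∑ K : Cell M, (QK M K).indicator (fun _ => c i K) x) 2 := by
    intro i
    apply memLp_finset_sum
    intro K _
    exact memLp_indicator_const 2 (QK_measurable K) (c i K) (Or.inr (measure_ne_top _ _))
  have h0 := hpsd (fun i x => ∑ K : Cell M, (QK M K).indicator (fun _ => c i K) x) hvmem
  have hterm : ∀ i j : Fin n, (∫ x : Td d, ∫ y : Td d, W i j (x - y)
        * (∑ K : Cell M, (QK M K).indicator (fun _ => c i K) x)
        * (∑ K : Cell M, (QK M K).indicator (fun _ => c j K) y))
      = ∑ K : Cell M, ∑ J : Cell M,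
          mK M * mK M * Wdisc M (W i j) K J * c i K * c j J := by
    intro i j
    have hg : ∀ (K J : Cell M), Integrable
        (fun z : Td d × Td d => (QK M K ×ˢ QK M J).indicator
            (fun z : Td d × Td d => W i j (z.1 - z.2)) z * (c i K * c j J))
        ((volume : Measure (Td d)).prod volume) :=
      fun K J => ((integrable_sub_pair (hW i j)).indicator
        (prod_meas (QK_measurable K) (QK_measurable J))).mul_const _
    have hFeq : (fun z : Td d × Td d => W i j (z.1 - z.2)
          * (∑ K : Cell M, (QK M K).indicator (fun _ => c i K) z.1)
          * (∑ K : Cell M, (QK M K).indicator (fun _ => c j K) z.2))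
        = fun z : Td d × Td d => ∑ K : Cell M, ∑ J : Cell M,
            (QK M K ×ˢ QK M J).indicator
              (fun z : Td d × Td d => W i j (z.1 - z.2)) z * (c i K * c j J) := by
      funext z
      calc W i j (z.1 - z.2)
            * (∑ K : Cell M, (QK M K).indicator (fun _ => c i K) z.1)
            * (∑ K : Cell M, (QK M K).indicator (fun _ => c j K) z.2)
          = ∑ J : Cell M, ∑ K : Cell M,
              (QK M K ×ˢ QK M J).indicator
                (fun z : Td d × Td d => W i j (z.1 - z.2)) z * (c i K * c j J) := by
            rw [Finset.mul_sum]
            apply Finset.sum_congr rfl; intro J _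
            rw [Finset.mul_sum, Finset.sum_mul]
            apply Finset.sum_congr rfl; intro K _
            by_cases h1 : z.1 ∈ QK M K <;> by_cases h2 : z.2 ∈ QK M J <;>
              simp [Set.indicator_apply, h1, h2, Set.mem_prod] <;> ring
        _ = _ := Finset.sum_comm
    have hintF : Integrable (fun z : Td d × Td d => W i j (z.1 - z.2)
          * (∑ K : Cell M, (QK M K).indicator (fun _ => c i K) z.1)
          * (∑ K : Cell M, (QK M K).indicator (fun _ => c j K) z.2))
        ((volume : Measure (Td d)).prod volume) := by
      rw [hFeq]
      exact integrable_finset_sum _ (fun K _ => integrable_finset_sum _ (fun J _ => hg K J))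
    rw [MeasureTheory.integral_integral hintF]
    rw [hFeq]
    rw [integral_finset_sum _ (fun K _ => integrable_finset_sum _ (fun J _ => hg K J))]
    apply Finset.sum_congr rfl; intro K _
    rw [integral_finset_sum _ (fun J _ => hg K J)]
    apply Finset.sum_congr rfl; intro J _
    rw [MeasureTheory.integral_mul_const, MeasureTheory.integral_indicator
      (prod_meas (QK_measurable K) (QK_measurable J))]
    rw [← wdisc_prod _ (hW i j)]
    ring
  have h1 : (∑ i, ∑ j, ∫ x : Td d, ∫ y : Td d, W i j (x - y)
        * (∑ K : Cell M, (QK M K).indicator (fun _ => c i K) x)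
        * (∑ K : Cell M, (QK M K).indicator (fun _ => c j K) y))
      = Phi M (fun i j => Wdisc M (W i j)) c c := by
    rw [Finset.sum_congr rfl (fun i _ => Finset.sum_congr rfl (fun j _ => hterm i j))]
    unfold Phi
    apply Finset.sum_congr rfl; intro i _
    apply Finset.sum_congr rfl; intro j _
    apply Finset.sum_congr rfl; intro K _
    apply Finset.sum_congr rfl; intro J _
    ring
  rw [← h1]
  simpa using h0

lemma QK_shift [∀ ℓ, NeZero (M ℓ)] (ℓ : Fin d) (K : Cell M) :
    (fun x : Td d => tvec M ℓ + x) ⁻¹' QK M (shift M K ℓ 1) = QK M K := by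
  ext x
  rw [QK_eq_pi, QK_eq_pi]
  simp only [Set.mem_preimage, Set.mem_pi, Set.mem_univ, true_implies]
  apply forall_congr'
  intro m
  by_cases h : m = ℓ
  · subst h
    have e1 : (tvec M m + x) m
        = (((M m : ℝ)⁻¹ : ℝ) : AddCircle (1:ℝ)) + x m := by
      simp [tvec]
    have e2 : (shift M K m 1) m = K m + 1 := by
      simp [shift]
    rw [e1, e2]
    exact Set.ext_iff.mp (facSet_shift (M m) (K m)) (x m)
  · have e1 : (tvec M ℓ + x) m = x m := by simp [tvec, h]
    have e2 : (shift M K ℓ 1) m = K m := Function.update_of_ne h _ _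
    rw [e1, e2]

lemma QK_shift' [∀ ℓ, NeZero (M ℓ)] (ℓ : Fin d) (J : Cell M) :
    (fun x : Td d => tvec M ℓ + x) ⁻¹' QK M J = QK M (shift M J ℓ (-1)) := by
  have h := QK_shift ℓ (shift M J ℓ (-1))
  have e : shift M (shift M J ℓ (-1)) ℓ 1 = J := by
    rw [shift_shift]
    have e1 : (-1 : ℤ) + 1 = 0 := by ring
    rw [e1, shift_zero]
  rw [e] at h
  exact h

lemma wdisc_trans [∀ ℓ, NeZero (M ℓ)] (W : Td d → ℝ)
    (hW : MeasureTheory.Integrable W) :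
    ∀ (ℓ : Fin d) (K J : Cell M),
      Wdisc M W (shift M K ℓ 1) J = Wdisc M W K (shift M J ℓ (-1)) := by
  intro ℓ K J
  have hne : mK M * mK M ≠ 0 := (mul_pos (mK_pos (M := M)) (mK_pos (M := M))).ne'
  apply mul_left_cancel₀ hne
  rw [wdisc_prod _ hW, wdisc_prod _ hW]
  have hmpT : MeasurePreserving
      (Prod.map (fun x : Td d => tvec M ℓ + x) (fun x : Td d => tvec M ℓ + x))
      ((volume : Measure (Td d)).prod volume) ((volume : Measure (Td d)).prod volume) :=
    (measurePreserving_add_left volume (tvec M ℓ)).prod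
      (measurePreserving_add_left volume (tvec M ℓ))
  have hmeas : AEStronglyMeasurable (fun z : Td d × Td d => W (z.1 - z.2))
      (Measure.map (Prod.map (fun x : Td d => tvec M ℓ + x) (fun x : Td d => tvec M ℓ + x))
        ((volume : Measure (Td d)).prod volume)) := by
    rw [hmpT.map_eq]
    exact (integrable_sub_pair hW).aestronglyMeasurable
  have step : (∫ z in QK M (shift M K ℓ 1) ×ˢ QK M J, W (z.1 - z.2)
        ∂((volume : Measure (Td d)).prod volume))
      = ∫ z in (Prod.map (fun x : Td d => tvec M ℓ + x) (fun x : Td d => tvec M ℓ + x)) ⁻¹'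
            (QK M (shift M K ℓ 1) ×ˢ QK M J),
          W ((tvec M ℓ + z.1) - (tvec M ℓ + z.2))
        ∂((volume : Measure (Td d)).prod volume) := by
    conv_lhs => rw [← hmpT.map_eq]
    exact setIntegral_map (prod_meas (QK_measurable _) (QK_measurable _)) hmeas
      hmpT.measurable.aemeasurable
  rw [step]
  have hpre : (Prod.map (fun x : Td d => tvec M ℓ + x) (fun x : Td d => tvec M ℓ + x)) ⁻¹'
        (QK M (shift M K ℓ 1) ×ˢ QK M J)
      = QK M K ×ˢ QK M (shift M J ℓ (-1)) := by
    ext z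
    simp only [Set.mem_preimage, Set.mem_prod, Prod.map]
    rw [← Set.mem_preimage (f := fun x : Td d => tvec M ℓ + x), QK_shift ℓ K,
      ← Set.mem_preimage (f := fun x : Td d => tvec M ℓ + x), QK_shift' ℓ J]
  rw [hpre]
  apply setIntegral_congr_ae (prod_meas (QK_measurable _) (QK_measurable _))
  apply Filter.Eventually.of_forall
  intro z _
  congr 1
  abel


/-- uniform bound for the discrete Fisher information for the fully
implicit scheme with symmetric positive semidefinite kernels. -/
theorem fisher_bound_implicit_scheme {d n N : ℕ} (M : Fin d → ℕ) [∀ ℓ, NeZero (M ℓ)]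
    (κ Δt : ℝ) (hκ : 0 < κ) (hΔt : 0 < Δt)
    (B : ℝ → ℝ) (α : ℝ) (hB : H2 B) (hB3 : H3 B α)
    (W : Fin n → Fin n → Td d → ℝ)
    (hW : ∀ i j, MeasureTheory.Integrable (W i j))
    (hsym : ∀ i j, ∀ᵐ x : Td d, W i j x = W j i (-x))
    (hpsd : ∀ v : Fin n → Td d → ℝ, (∀ i, MeasureTheory.MemLp (v i) 2) →
      0 ≤ ∑ i, ∑ j, ∫ x : Td d, ∫ y : Td d, W i j (x - y) * v i x * v j y)
    (u : ℕ → Fin n → Cell M → ℝ)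
    (hu0 : ∀ i K, 0 ≤ u 0 i K)
    (hpos : ∀ k ∈ Finset.Icc 1 N, ∀ i K, 0 < u k i K)
    (hstep : ∀ k ∈ Finset.Icc 1 N, ∀ i, Step M κ Δt B (u (k-1) i) (u k i)
        (pot M (fun i j => Wdisc M (W i j)) (u k) i)) :
    (1 - α) * (HB M (u N) - HB M (u 0))
        + (α/κ) * (HR M (fun i j => Wdisc M (W i j)) (u N)
            - HR M (fun i j => Wdisc M (W i j)) (u 0))
        + κ * (1 - α)^2 * ∑ k ∈ Finset.Icc 1 N, Δt * Fisher M (u k) ≤ 0 := by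
  have hsymd : ∀ (i j : Fin n) (K J : Cell M),
      Wdisc M (W i j) K J = Wdisc M (W j i) J K := wdisc_symm W hW hsym
  have hpsdd := wdisc_psd (M := M) W hW hpsd
  have htrans : ∀ (i j : Fin n) (ℓ : Fin d) (K J : Cell M),
      Wdisc M (W i j) (shift M K ℓ 1) J = Wdisc M (W i j) K (shift M J ℓ (-1)) :=
    fun i j => wdisc_trans (W i j) (hW i j)
  have hper : ∀ k ∈ Finset.Icc 1 N,
      (1 - α) * (HB M (u k) - HB M (u (k - 1)))
        + (α / κ) * (HR M (fun i j => Wdisc M (W i j)) (u k)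
            - HR M (fun i j => Wdisc M (W i j)) (u (k - 1)))
        + κ * (1 - α) ^ 2 * (Δt * Fisher M (u k)) ≤ 0 := by
    intro k hk
    obtain ⟨hk1, hkN⟩ := Finset.mem_Icc.mp hk
    have hv : ∀ i K, 0 ≤ u (k - 1) i K := by
      intro i K
      by_cases hk2 : k = 1
      · subst hk2; exact hu0 i K
      · have hmem : k - 1 ∈ Finset.Icc 1 N := Finset.mem_Icc.mpr ⟨by omega, by omega⟩
        exact (hpos _ hmem i K).le
    exact per_step κ Δt α B hκ hΔt hB hB3 (fun i j => Wdisc M (W i j))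
      hsymd hpsdd (fun i j => htrans i j) (u (k - 1)) (u k)
      (hpos k hk) hv (hstep k hk)
  have hsum := Finset.sum_nonpos hper
  have t1 := telescope (fun k => HB M (u k)) N
  have t2 := telescope (fun k => HR M (fun i j => Wdisc M (W i j)) (u k)) N
  rw [Finset.sum_add_distrib, Finset.sum_add_distrib, ← Finset.mul_sum, ← Finset.mul_sum,
    ← Finset.mul_sum, t1, t2] at hsum
  linarith [hsum]

end SG
end

section
/- On the Cartesian torus grid, let d ≥ 1, r₁ = (d+2)/d, r₂ = (d+2)/(d+1), N ≥ 1, Δt > 0, and let u^k : G → [0,∞) for k = 1,…,N. For an edge σ joining cells K and L, let ū^k_σ = ((√(u^k(K)) + √(u^k(L)))/2)². Then the discrete gradient of u^k satisfies ∑_{k=1}^N Δt·‖∇^h u^k‖_{0,r₂,T*}^{r₂} ≤ 2^{r₂}·(∑_{k=1}^N Δt·∑_{σ∈E} m(Δ_σ)·(ū^k_σ)^{r₁})^{r₂/(2r₁)}·(∑_{k=1}^N Δt·‖∇^h √(u^k)‖_{0,2,T*}²)^{r₂/2}. -/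
open MeasureTheory Real Finset

namespace SG

variable {d : ℕ}

/-- discrete Hölder estimate for the gradient of `u` in terms of the
power means and the gradient of `√u`. -/
theorem discrete_gradient_holder_estimate {d N : ℕ} (hd : 1 ≤ d) (hN : 1 ≤ N)
    (M : Fin d → ℕ) [∀ ℓ, NeZero (M ℓ)]
    (Δt : ℝ) (hΔt : 0 < Δt)
    (u : ℕ → Cell M → ℝ) (hu : ∀ k K, 0 ≤ u k K)
    (r₁ r₂ : ℝ) (hr₁ : r₁ = ((d:ℝ) + 2) / d) (hr₂ : r₂ = ((d:ℝ) + 2) / (d + 1)) :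
    ∑ k ∈ Finset.Icc 1 N, Δt * ∑ K : Cell M, ∑ ℓ : Fin d,
        mK M * gradh M (u k) K ℓ ^ r₂
      ≤ (2:ℝ) ^ r₂ *
        (∑ k ∈ Finset.Icc 1 N, Δt * ∑ K : Cell M, ∑ ℓ : Fin d,
            mK M * (((Real.sqrt (u k K) + Real.sqrt (u k (shift M K ℓ 1))) / 2) ^ 2) ^ r₁)
          ^ (r₂ / (2 * r₁)) *
        (∑ k ∈ Finset.Icc 1 N, Δt * ∑ K : Cell M, ∑ ℓ : Fin d,
            mK M * gradh M (fun J => Real.sqrt (u k J)) K ℓ ^ 2)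
          ^ (r₂ / 2) := by
  have hd0 : (0:ℝ) < d := by exact_mod_cast Nat.lt_of_lt_of_le Nat.zero_lt_one hd
  have hr1pos : 0 < r₁ := by rw [hr₁]; positivity
  have hr2pos : 0 < r₂ := by rw [hr₂]; positivity
  set p : ℝ := 2 * r₁ / r₂ with hp
  set q : ℝ := 2 / r₂ with hq
  have hpq : Real.HolderConjugate p q := by
    rw [Real.holderConjugate_iff]
    constructor
    · rw [hp, hr₁, hr₂]
      rw [show 2 * (((d:ℝ)+2)/d) / (((d:ℝ)+2)/(d+1)) = 2*((d:ℝ)+1)/d by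
        field_simp]
      rw [lt_div_iff₀ hd0]; linarith
    · rw [hp, hq, hr₁, hr₂]; field_simp; ring
  have hr2p : r₂ * p = 2 * r₁ := by
    rw [hp]; field_simp
  have hr2q : r₂ * q = 2 := by
    rw [hq]; field_simp
  have h1p : 1 / p = r₂ / (2 * r₁) := by rw [hp, one_div_div]
  have h1q : 1 / q = r₂ / 2 := by rw [hq, one_div_div]
  have hmK : 0 < mK M := by
    unfold mK
    apply Finset.prod_pos
    intro ℓ _
    have : (0:ℝ) < M ℓ := by exact_mod_cast Nat.pos_of_ne_zero (NeZero.ne (M ℓ))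
    positivity
  have hw : 0 < Δt * mK M := mul_pos hΔt hmK
  classical
  set S : Finset (ℕ × Cell M × Fin d) := Finset.Icc 1 N ×ˢ (Finset.univ ×ˢ Finset.univ)
    with hS
  have hsum : ∀ F : ℕ → Cell M → Fin d → ℝ,
      (∑ x ∈ S, F x.1 x.2.1 x.2.2)
        = ∑ k ∈ Finset.Icc 1 N, ∑ K : Cell M, ∑ ℓ : Fin d, F k K ℓ := by
    intro F
    rw [hS, Finset.sum_product]
    exact Finset.sum_congr rfl fun k _ => Finset.sum_product _ _ _
  -- a = arithmetic mean of the square roots, b = gradient of sqrt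
  have key : ∀ (a b : ℕ → Cell M → Fin d → ℝ),
      (∀ k K ℓ, 0 ≤ a k K ℓ) → (∀ k K ℓ, 0 ≤ b k K ℓ) →
      (∑ x ∈ S, ((Δt * mK M) ^ (1/p) * a x.1 x.2.1 x.2.2 ^ r₂)
          * ((Δt * mK M) ^ (1/q) * b x.1 x.2.1 x.2.2 ^ r₂))
        ≤ (∑ x ∈ S, ((Δt * mK M) ^ (1/p) * a x.1 x.2.1 x.2.2 ^ r₂) ^ p) ^ (1/p)
          * (∑ x ∈ S, ((Δt * mK M) ^ (1/q) * b x.1 x.2.1 x.2.2 ^ r₂) ^ q) ^ (1/q) := by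
    intro a b hann hbnn
    refine Real.inner_le_Lp_mul_Lq_of_nonneg S hpq ?_ ?_
    · intro x _
      exact mul_nonneg (Real.rpow_nonneg hw.le _) (Real.rpow_nonneg (hann _ _ _) _)
    · intro x _
      exact mul_nonneg (Real.rpow_nonneg hw.le _) (Real.rpow_nonneg (hbnn _ _ _) _)
  -- specialize
  set a : ℕ → Cell M → Fin d → ℝ := fun k K ℓ =>
    (Real.sqrt (u k K) + Real.sqrt (u k (shift M K ℓ 1))) / 2 with ha
  set b : ℕ → Cell M → Fin d → ℝ := fun k K ℓ =>
    gradh M (fun J => Real.sqrt (u k J)) K ℓ with hb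
  have hann : ∀ k K ℓ, 0 ≤ a k K ℓ := by
    intro k K ℓ; rw [ha]; positivity
  have hbnn : ∀ k K ℓ, 0 ≤ b k K ℓ := by
    intro k K ℓ; rw [hb]
    exact mul_nonneg (mul_nonneg (Nat.cast_nonneg d) (Nat.cast_nonneg _)) (abs_nonneg _)
  have hfact : ∀ k K ℓ, gradh M (u k) K ℓ = 2 * a k K ℓ * b k K ℓ := by
    intro k K ℓ
    have hL := Real.sq_sqrt (hu k (shift M K ℓ 1))
    have hK := Real.sq_sqrt (hu k K)
    have h1 : u k (shift M K ℓ 1) - u k K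
        = (Real.sqrt (u k (shift M K ℓ 1)) - Real.sqrt (u k K))
          * (Real.sqrt (u k K) + Real.sqrt (u k (shift M K ℓ 1))) := by
      linear_combination -hL + hK
    rw [ha, hb]
    simp only [gradh, h1, abs_mul]
    rw [abs_of_nonneg (by positivity :
      (0:ℝ) ≤ Real.sqrt (u k K) + Real.sqrt (u k (shift M K ℓ 1)))]
    ring
  -- LHS rewriting
  have hLHS : (∑ k ∈ Finset.Icc 1 N, Δt * ∑ K : Cell M, ∑ ℓ : Fin d,
        mK M * gradh M (u k) K ℓ ^ r₂)
      = (2:ℝ) ^ r₂ * ∑ x ∈ S, ((Δt * mK M) ^ (1/p) * a x.1 x.2.1 x.2.2 ^ r₂)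
          * ((Δt * mK M) ^ (1/q) * b x.1 x.2.1 x.2.2 ^ r₂) := by
    rw [Finset.mul_sum, hsum (fun k K ℓ => (2:ℝ) ^ r₂ *
      (((Δt * mK M) ^ (1/p) * a k K ℓ ^ r₂) * ((Δt * mK M) ^ (1/q) * b k K ℓ ^ r₂)))]
    refine Finset.sum_congr rfl fun k _ => ?_
    rw [Finset.mul_sum]
    refine Finset.sum_congr rfl fun K _ => ?_
    rw [Finset.mul_sum]
    refine Finset.sum_congr rfl fun ℓ _ => ?_
    have e1 : ((Δt * mK M) ^ (1/p) * a k K ℓ ^ r₂) * ((Δt * mK M) ^ (1/q) * b k K ℓ ^ r₂)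
        = (Δt * mK M) * (a k K ℓ ^ r₂ * b k K ℓ ^ r₂) := by
      rw [mul_mul_mul_comm, ← Real.rpow_add hw, one_div, one_div, hpq.inv_add_inv_eq_one,
        Real.rpow_one]
    have e2 : (2 * a k K ℓ * b k K ℓ) ^ r₂ = 2 ^ r₂ * (a k K ℓ ^ r₂ * b k K ℓ ^ r₂) := by
      rw [mul_assoc, Real.mul_rpow (by norm_num) (mul_nonneg (hann k K ℓ) (hbnn k K ℓ)),
        Real.mul_rpow (hann k K ℓ) (hbnn k K ℓ)]
    rw [hfact k K ℓ, e1, e2]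
    ring
  -- first factor
  have hA : (∑ x ∈ S, ((Δt * mK M) ^ (1/p) * a x.1 x.2.1 x.2.2 ^ r₂) ^ p)
      = ∑ k ∈ Finset.Icc 1 N, Δt * ∑ K : Cell M, ∑ ℓ : Fin d,
          mK M * ((a k K ℓ) ^ 2) ^ r₁ := by
    rw [hsum (fun k K ℓ => ((Δt * mK M) ^ (1/p) * a k K ℓ ^ r₂) ^ p)]
    refine Finset.sum_congr rfl fun k _ => ?_
    rw [Finset.mul_sum]
    refine Finset.sum_congr rfl fun K _ => ?_
    rw [Finset.mul_sum]
    refine Finset.sum_congr rfl fun ℓ _ => ?_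
    rw [Real.mul_rpow (Real.rpow_nonneg hw.le _) (Real.rpow_nonneg (hann k K ℓ) _),
      ← Real.rpow_natCast (a k K ℓ) 2,
      ← Real.rpow_mul hw.le, ← Real.rpow_mul (hann k K ℓ), ← Real.rpow_mul (hann k K ℓ),
      one_div, inv_mul_cancel₀ hpq.ne_zero, Real.rpow_one, hr2p]
    push_cast
    ring
  have hB : (∑ x ∈ S, ((Δt * mK M) ^ (1/q) * b x.1 x.2.1 x.2.2 ^ r₂) ^ q)
      = ∑ k ∈ Finset.Icc 1 N, Δt * ∑ K : Cell M, ∑ ℓ : Fin d,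
          mK M * (b k K ℓ) ^ (2:ℕ) := by
    rw [hsum (fun k K ℓ => ((Δt * mK M) ^ (1/q) * b k K ℓ ^ r₂) ^ q)]
    refine Finset.sum_congr rfl fun k _ => ?_
    rw [Finset.mul_sum]
    refine Finset.sum_congr rfl fun K _ => ?_
    rw [Finset.mul_sum]
    refine Finset.sum_congr rfl fun ℓ _ => ?_
    have hq0 : q ≠ 0 := hpq.symm.ne_zero
    rw [Real.mul_rpow (Real.rpow_nonneg hw.le _) (Real.rpow_nonneg (hbnn k K ℓ) _),
      ← Real.rpow_natCast (b k K ℓ) 2,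
      ← Real.rpow_mul hw.le, ← Real.rpow_mul (hbnn k K ℓ),
      one_div, inv_mul_cancel₀ hq0, Real.rpow_one, hr2q]
    push_cast
    ring
  rw [hLHS]
  have hkey := key a b hann hbnn
  rw [hA, hB] at hkey
  rw [mul_assoc, ← h1p, ← h1q]
  exact mul_le_mul_of_nonneg_left hkey (by positivity)

end SG
end
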